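/- There is a well-defined group homomorphism π : L(6,3,2) → L(3,3,3) with π(u1) = y3, π(u2) = y1 + y2, π(u3) = c (the canonical element of L(3,3,3)), and its kernel is the cyclic group of order 2 generated by 3u1 + u3 - c', where c' is the canonical element of L(6,3,2). -/
import Mathlib

/-- Relations subgroup for the string group of weight type `p`:
generated by the elements `p i • x i - p 0 • x 0`. -/
noncomputable def stringRels (t : ℕ) (p : Fin (t + 1) → ℕ) :
    AddSubgroup (Fin (t + 1) →₀ ℤ) :=
  AddSubgroup.closure (Set.range fun i : Fin (t + 1) =>
    Finsupp.single i (p i : ℤ) - Finsupp.single 0 (p 0 : ℤ))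

/-- The string group `L(p)`. -/
abbrev StringGroup (t : ℕ) (p : Fin (t + 1) → ℕ) :=
  (Fin (t + 1) →₀ ℤ) ⧸ stringRels t p

/-- The generator `x_i` of the string group. -/
noncomputable def gen (t : ℕ) (p : Fin (t + 1) → ℕ) (i : Fin (t + 1)) :
    StringGroup t p :=
  QuotientAddGroup.mk (Finsupp.single i 1)

/-- The canonical element `c = p_i • x_i` of the string group. -/
noncomputable def can (t : ℕ) (p : Fin (t + 1) → ℕ) : StringGroup t p :=
  (p 0 : ℤ) • gen t p 0

namespace Stmt16Aux

open Finsupp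

noncomputable def w : Fin 3 → (Fin 3 →₀ ℤ) :=
  ![Finsupp.single 2 1, Finsupp.single 0 1 + Finsupp.single 1 1, Finsupp.single 0 3]

noncomputable def M : (Fin 3 →₀ ℤ) →+ (Fin 3 →₀ ℤ) :=
  Finsupp.liftAddHom (fun i => zmultiplesHom _ (w i))

lemma M_single (i : Fin 3) (a : ℤ) : M (Finsupp.single i a) = a • w i := by
  simp [M, Finsupp.liftAddHom_apply_single]

lemma decomp (v : Fin 3 →₀ ℤ) :
    v = Finsupp.single 0 (v 0) + Finsupp.single 1 (v 1) + Finsupp.single 2 (v 2) := by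
  ext j; fin_cases j <;> simp [Finsupp.single_apply]

noncomputable def s1 : Fin 3 →₀ ℤ := Finsupp.single 1 3 - Finsupp.single 0 3
noncomputable def s2 : Fin 3 →₀ ℤ := Finsupp.single 2 3 - Finsupp.single 0 3
noncomputable def t1 : Fin 3 →₀ ℤ := Finsupp.single 1 3 - Finsupp.single 0 6
noncomputable def t2 : Fin 3 →₀ ℤ := Finsupp.single 2 2 - Finsupp.single 0 6
noncomputable def k0 : Fin 3 →₀ ℤ := Finsupp.single 2 1 - Finsupp.single 0 3

lemma rels333_eq : stringRels 2 ![3,3,3] = AddSubgroup.closure {s1, s2} := by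
  unfold stringRels
  apply le_antisymm
  · apply (AddSubgroup.closure_le _).mpr
    rintro x ⟨i, rfl⟩
    fin_cases i
    · simpa using zero_mem _
    · exact AddSubgroup.subset_closure (by left; simp [s1])
    · exact AddSubgroup.subset_closure (by right; simp [s2])
  · apply (AddSubgroup.closure_le _).mpr
    rintro x hx
    rcases hx with h | h
    · exact AddSubgroup.subset_closure ⟨1, by simp [s1] at h ⊢; exact h.symm⟩
    · exact AddSubgroup.subset_closure ⟨2, by simp_all [s2]⟩

lemma rels632_eq : stringRels 2 ![6,3,2] = AddSubgroup.closure {t1, t2} := by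
  unfold stringRels
  apply le_antisymm
  · apply (AddSubgroup.closure_le _).mpr
    rintro x ⟨i, rfl⟩
    fin_cases i
    · simpa using zero_mem _
    · exact AddSubgroup.subset_closure (by left; simp [t1])
    · exact AddSubgroup.subset_closure (by right; simp [t2])
  · apply (AddSubgroup.closure_le _).mpr
    rintro x hx
    rcases hx with h | h
    · exact AddSubgroup.subset_closure ⟨1, by simp_all [t1]⟩
    · exact AddSubgroup.subset_closure ⟨2, by simp_all [t2]⟩

lemma s1_mem : s1 ∈ stringRels 2 ![3,3,3] := by
  rw [rels333_eq]; exact AddSubgroup.subset_closure (by left; rfl)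

lemma s2_mem : s2 ∈ stringRels 2 ![3,3,3] := by
  rw [rels333_eq]; exact AddSubgroup.subset_closure (by right; rfl)

lemma t1_mem : t1 ∈ stringRels 2 ![6,3,2] := by
  rw [rels632_eq]; exact AddSubgroup.subset_closure (by left; rfl)

lemma t2_mem : t2 ∈ stringRels 2 ![6,3,2] := by
  rw [rels632_eq]; exact AddSubgroup.subset_closure (by right; rfl)

/-- relations of 632 are mapped by M into relations of 333 -/
lemma M_rels : stringRels 2 ![6,3,2] ≤ (stringRels 2 ![3,3,3]).comap M := by
  rw [rels632_eq]
  apply (AddSubgroup.closure_le _).mpr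
  rintro x (h | h) <;> subst h
  · -- M t1 = s1 - 2 • s2
    have : M t1 = s1 - (2:ℤ) • s2 := by
      rw [t1, map_sub, M_single, M_single]
      ext j; fin_cases j <;> simp [w, s1, s2, Finsupp.single_apply]
    simp only [SetLike.mem_coe, AddSubgroup.mem_comap, this]
    exact AddSubgroup.sub_mem _ s1_mem (AddSubgroup.zsmul_mem _ s2_mem 2)
  · -- M t2 = -2 • s2 ... M t2 = 2•(single 0 3) - 6•(single 2 1) = single 0 6 - single 2 6 = -2•s2
    have : M t2 = (-2:ℤ) • s2 := by
      rw [t2, map_sub, M_single, M_single]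
      ext j; fin_cases j <;> simp [w, s2, Finsupp.single_apply]
    simp only [SetLike.mem_coe, AddSubgroup.mem_comap, this]
    exact AddSubgroup.zsmul_mem _ s2_mem (-2)

noncomputable def F : (Fin 3 →₀ ℤ) →+ StringGroup 2 ![3,3,3] :=
  (QuotientAddGroup.mk' (stringRels 2 ![3,3,3])).comp M

noncomputable def piHom : StringGroup 2 ![6,3,2] →+ StringGroup 2 ![3,3,3] :=
  QuotientAddGroup.lift _ F (fun x hx => by
    simpa [F, QuotientAddGroup.eq_zero_iff] using M_rels hx)

lemma pi_mk (v : Fin 3 →₀ ℤ) :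
    piHom (QuotientAddGroup.mk v) = QuotientAddGroup.mk (M v) := rfl

-- the kernel element
lemma k_eq : (3 : ℤ) • gen 2 ![6, 3, 2] 0 + gen 2 ![6, 3, 2] 2 - can 2 ![6, 3, 2]
    = QuotientAddGroup.mk k0 := by
  show (3:ℤ) • (QuotientAddGroup.mk (Finsupp.single 0 1) : StringGroup 2 ![6,3,2]) + _ - _ = _
  rw [can, gen, gen]
  rw [show ((![6,3,2] : Fin 3 → ℕ) 0 : ℤ) = 6 by norm_num]
  rw [← QuotientAddGroup.mk_zsmul, ← QuotientAddGroup.mk_zsmul, ← QuotientAddGroup.mk_add,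
    ← QuotientAddGroup.mk_sub]
  congr 1
  ext j; fin_cases j <;> simp [k0, Finsupp.single_apply]

lemma two_k0 : (2:ℤ) • k0 - t2 = 0 := by
  ext j; fin_cases j <;> simp [k0, t2, Finsupp.single_apply]

lemma pi_k0 : piHom (QuotientAddGroup.mk k0) = 0 := by
  rw [pi_mk, QuotientAddGroup.eq_zero_iff]
  have : M k0 = (-1:ℤ) • s2 := by
    rw [k0, map_sub, M_single, M_single]
    ext j; fin_cases j <;> simp [w, s2, Finsupp.single_apply]
  rw [this]
  exact AddSubgroup.zsmul_mem _ s2_mem (-1)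

noncomputable def g0 : (Fin 3 →₀ ℤ) →+ ZMod 2 :=
  (Int.castAddHom (ZMod 2)).comp (Finsupp.applyAddHom (0 : Fin 3))

noncomputable def g : StringGroup 2 ![6,3,2] →+ ZMod 2 :=
  QuotientAddGroup.lift _ g0 (fun x hx => by
    rw [rels632_eq] at hx
    refine (AddSubgroup.closure_le (AddMonoidHom.ker g0)).mpr ?_ hx
    rintro y (h | h) <;> subst h <;>
      simp [SetLike.mem_coe, AddMonoidHom.mem_ker, g0, t1, t2, Finsupp.single_apply] <;> decide)

lemma k_ne_zero : (QuotientAddGroup.mk k0 : StringGroup 2 ![6,3,2]) ≠ 0 := by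
  intro h
  have hg : g (QuotientAddGroup.mk k0) = 0 := by rw [h, map_zero]
  have : g (QuotientAddGroup.mk k0) = ((-3 : ℤ) : ZMod 2) := by
    show g0 k0 = _
    simp [g0, k0, Finsupp.single_apply]
  rw [this] at hg
  revert hg; decide

end Stmt16Aux

open Stmt16Aux in
theorem stmt_16 :
    ∃ π : StringGroup 2 ![6, 3, 2] →+ StringGroup 2 ![3, 3, 3],
      π (gen 2 ![6, 3, 2] 0) = gen 2 ![3, 3, 3] 2 ∧
      π (gen 2 ![6, 3, 2] 1) = gen 2 ![3, 3, 3] 0 + gen 2 ![3, 3, 3] 1 ∧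
      π (gen 2 ![6, 3, 2] 2) = can 2 ![3, 3, 3] ∧
      π.ker = AddSubgroup.zmultiples
        ((3 : ℤ) • gen 2 ![6, 3, 2] 0 + gen 2 ![6, 3, 2] 2 - can 2 ![6, 3, 2]) ∧
      addOrderOf
        ((3 : ℤ) • gen 2 ![6, 3, 2] 0 + gen 2 ![6, 3, 2] 2 - can 2 ![6, 3, 2]) = 2 := by
  refine ⟨piHom, ?_, ?_, ?_, ?_, ?_⟩
  · show piHom (QuotientAddGroup.mk (Finsupp.single 0 1)) = _
    rw [pi_mk, M_single]
    show _ = (QuotientAddGroup.mk (Finsupp.single 2 1) : StringGroup 2 ![3,3,3])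
    congr 1
    simp [w]
  · show piHom (QuotientAddGroup.mk (Finsupp.single 1 1)) = _
    rw [pi_mk, M_single, gen, gen, ← QuotientAddGroup.mk_add]
    congr 1
    simp [w]
  · show piHom (QuotientAddGroup.mk (Finsupp.single 2 1)) = _
    rw [pi_mk, M_single, can, gen,
      show ((![3,3,3] : Fin 3 → ℕ) 0 : ℤ) = 3 by norm_num, ← QuotientAddGroup.mk_zsmul]
    congr 1
    ext j; fin_cases j <;> simp [w, Finsupp.single_apply]
  · rw [k_eq]
    ext x
    constructor
    · intro hx
      obtain ⟨v, rfl⟩ := QuotientAddGroup.mk_surjective x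
      rw [AddMonoidHom.mem_ker, pi_mk, QuotientAddGroup.eq_zero_iff, rels333_eq,
        AddSubgroup.mem_closure_pair] at hx
      obtain ⟨m, n, hmn⟩ := hx
      -- extract component equations
      have hMv : M v = (v 0) • w 0 + (v 1) • w 1 + (v 2) • w 2 := by
        conv_lhs => rw [decomp v]
        rw [map_add, map_add, M_single, M_single, M_single]
      rw [hMv] at hmn
      have h0 := DFunLike.congr_fun hmn (0 : Fin 3)
      have h1 := DFunLike.congr_fun hmn (1 : Fin 3)
      have h2 := DFunLike.congr_fun hmn (2 : Fin 3)
      simp [s1, s2, w, Finsupp.single_apply] at h0 h1 h2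
      rw [AddSubgroup.mem_zmultiples_iff]
      refine ⟨-2*m - n, ?_⟩
      rw [← QuotientAddGroup.mk_zsmul]
      symm
      rw [QuotientAddGroup.eq]
      have key : -v + (-2*m - n) • k0 = (-m) • t1 := by
        ext j
        have hvj := DFunLike.congr_fun (decomp v) j
        fin_cases j <;>
          simp [k0, t1, Finsupp.single_apply] <;> omega
      rw [key]
      exact AddSubgroup.zsmul_mem _ t1_mem (-m)
    · intro hx
      rw [AddSubgroup.mem_zmultiples_iff] at hx
      obtain ⟨s, rfl⟩ := hx
      rw [AddMonoidHom.mem_ker, map_zsmul, pi_k0, smul_zero]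
  · rw [k_eq]
    have h2 : (2 : ℕ) • (QuotientAddGroup.mk k0 : StringGroup 2 ![6,3,2]) = 0 := by
      rw [← QuotientAddGroup.mk_nsmul, QuotientAddGroup.eq_zero_iff]
      have : (2:ℕ) • k0 = t2 := by
        have := two_k0
        ext j
        have hj := DFunLike.congr_fun this j
        simp at hj ⊢
        omega
      rw [this]; exact t2_mem
    have := addOrderOf_eq_prime (hp := ⟨Nat.prime_two⟩) h2 k_ne_zero
    exact this
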